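/- Let T > 0, p ∈ [2,3), α > 0, and let ω be a control function on [0,T]. Let Z : [0,T] → ℝ^e and y : [0,T] → ℝⁿ satisfy |Z_t − Z_s| ≤ ω(s,t)^{1/p} and |y_t − y_s| ≤ ω(s,t)^{1/p} for all 0 ≤ s ≤ t ≤ T. Let V : ℝⁿ → L(ℝ^e, ℝⁿ) be Lipschitz with Lipschitz constant at most 1 (in operator norm), and define R_{s,t} := (y_t − y_s) − V(y_s)(Z_t − Z_s). Suppose there exists c ≥ 0 such that |R_{s,t}| ≤ c·ω(s,t)^{2/p} whenever ω(s,t) ≤ α. Then for all 0 ≤ s ≤ t ≤ T one has |R_{s,t}| ≤ (c + 1)·(N_α(ω; [0,T]) + 2)·ω(s,t)^{2/p}. -/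

import Mathlib

open Set

/-- A control function on `[0,T]`: continuous on the triangle
`{(s,t) : 0 ≤ s ≤ t ≤ T}`, nonnegative, vanishing on the diagonal, and
superadditive. -/
def IsControl (T : ℝ) (ω : ℝ → ℝ → ℝ) : Prop :=
  ContinuousOn (fun p : ℝ × ℝ => ω p.1 p.2)
      {p : ℝ × ℝ | 0 ≤ p.1 ∧ p.1 ≤ p.2 ∧ p.2 ≤ T} ∧
    (∀ s t, 0 ≤ s → s ≤ t → t ≤ T → 0 ≤ ω s t) ∧
    (∀ t ∈ Set.Icc (0 : ℝ) T, ω t t = 0) ∧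
    ∀ s u t, 0 ≤ s → s ≤ u → u ≤ t → t ≤ T → ω s u + ω u t ≤ ω s t

/-- The greedy sequence of times `τ₀ = s`,
`τ_{i+1} = inf{u ∈ (τ_i, t) : ω(τ_i, u) ≥ α} ∧ t` associated to a control `ω`. -/
noncomputable def greedyTau (ω : ℝ → ℝ → ℝ) (α s t : ℝ) : ℕ → ℝ
  | 0 => s
  | i + 1 => sInf ({u : ℝ | greedyTau ω α s t i < u ∧ u < t ∧
      α ≤ ω (greedyTau ω α s t i) u} ∪ {t})

/-- `N_α(ω; [s,t]) = max{n : τ_n < t}`, the greedy count of subintervals of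
`ω`-size `α` covering `[s,t]`. -/
noncomputable def greedyN (ω : ℝ → ℝ → ℝ) (α s t : ℝ) : ℕ :=
  sSup {n : ℕ | greedyTau ω α s t n < t}

section

lemma greedyTau_succ (ω : ℝ → ℝ → ℝ) (α s t : ℝ) (i : ℕ) :
    greedyTau ω α s t (i+1) = sInf ({u : ℝ | greedyTau ω α s t i < u ∧ u < t ∧
      α ≤ ω (greedyTau ω α s t i) u} ∪ {t}) := rfl
variable {T α : ℝ} {ω : ℝ → ℝ → ℝ}
lemma omega_mono (hω : IsControl T ω) {a b c d : ℝ} (h0 : 0 ≤ a) (hab : a ≤ b)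
    (hbc : b ≤ c) (hcd : c ≤ d) (hdT : d ≤ T) : ω b c ≤ ω a d := by
  obtain ⟨-, hnn, -, hsup⟩ := hω
  have h1 := hsup a b c h0 hab hbc (hcd.trans hdT)
  have h2 := hsup a c d h0 (hab.trans hbc) hcd hdT
  have h3 := hnn a b h0 hab ((hbc.trans hcd).trans hdT)
  have h4 := hnn c d (h0.trans (hab.trans hbc)) hcd hdT
  linarith
lemma omega_cont (hω : IsControl T ω) {a : ℝ} (h0 : 0 ≤ a) :
    ContinuousOn (fun u => ω a u) (Icc a T) := by
  have : (fun u => ω a u) = (fun p : ℝ × ℝ => ω p.1 p.2) ∘ (fun u => (a, u)) := rfl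
  rw [this]
  exact hω.1.comp (Continuous.continuousOn (by continuity))
    (fun u hu => ⟨h0, hu.1, hu.2⟩)
lemma tau_bounds (hω : IsControl T ω) (hT : 0 < T) :
    ∀ i, 0 ≤ greedyTau ω α 0 T i ∧ greedyTau ω α 0 T i ≤ T ∧
      greedyTau ω α 0 T i ≤ greedyTau ω α 0 T (i+1) := by
  intro i
  induction i with
  | zero =>
    refine ⟨le_refl _, hT.le, ?_⟩
    rw [greedyTau_succ]
    refine le_csInf ⟨T, Or.inr rfl⟩ ?_
    rintro u (⟨h1, -, -⟩ | rfl)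
    · exact h1.le
    · exact hT.le
  | succ i ih =>
    obtain ⟨h0, hiT, hmono⟩ := ih
    have hbdd : BddBelow ({u : ℝ | greedyTau ω α 0 T i < u ∧ u < T ∧
        α ≤ ω (greedyTau ω α 0 T i) u} ∪ {T}) := by
      refine ⟨greedyTau ω α 0 T i, ?_⟩
      rintro u (⟨h1, -, -⟩ | rfl)
      · exact h1.le
      · exact hiT
    have hle : greedyTau ω α 0 T (i+1) ≤ T := by
      rw [greedyTau_succ]; exact csInf_le hbdd (Or.inr rfl)
    refine ⟨h0.trans hmono, hle, ?_⟩
    rw [greedyTau_succ ω α 0 T (i+1)]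
    refine le_csInf ⟨T, Or.inr rfl⟩ ?_
    rintro u (⟨h1, -, -⟩ | rfl)
    · exact h1.le
    · exact hle

lemma tau_bddBelow (hω : IsControl T ω) (hT : 0 < T) (i : ℕ) :
    BddBelow ({u : ℝ | greedyTau ω α 0 T i < u ∧ u < T ∧
        α ≤ ω (greedyTau ω α 0 T i) u} ∪ {T}) := by
  refine ⟨greedyTau ω α 0 T i, ?_⟩
  rintro u (⟨h1, -, -⟩ | rfl)
  · exact h1.le
  · exact (tau_bounds hω hT i).2.1

lemma tau_gap_le (hω : IsControl T ω) (hT : 0 < T) (hα : 0 < α) (i : ℕ) :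
    ω (greedyTau ω α 0 T i) (greedyTau ω α 0 T (i+1)) ≤ α := by
  set a := greedyTau ω α 0 T i with ha
  set b := greedyTau ω α 0 T (i+1) with hbdef
  obtain ⟨ha0, haT, hab⟩ := tau_bounds hω hT (α := α) i
  have hbT : b ≤ T := (tau_bounds hω hT (α := α) (i+1)).2.1
  rcases eq_or_lt_of_le hab with heq | hlt
  · have hba : b = a := heq.symm
    rw [hba, hω.2.2.1 a ⟨ha0, haT⟩]; exact hα.le
  · by_contra hcon
    push_neg at hcon
    have hc : ContinuousWithinAt (fun u => ω a u) (Icc a T) b :=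
      (omega_cont hω ha0).continuousWithinAt ⟨hab, hbT⟩
    rw [Metric.continuousWithinAt_iff] at hc
    obtain ⟨δ, hδ, hd⟩ := hc (ω a b - α) (by linarith)
    set u := max (b - δ/2) ((a+b)/2) with hu
    have hu1 : a < u := lt_max_of_lt_right (by linarith)
    have hu2 : u < b := max_lt (by linarith) (by linarith)
    have humem : u ∈ Icc a T := ⟨hu1.le, hu2.le.trans hbT⟩
    have hdist : dist u b < δ := by
      rw [Real.dist_eq, abs_sub_lt_iff]
      constructor
      · linarith
      · have := le_max_left (b - δ/2) ((a+b)/2)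
        linarith
    have hval := hd humem hdist
    rw [Real.dist_eq, abs_sub_lt_iff] at hval
    have hαu : α ≤ ω a u := by linarith [hval.2]
    have hmem : u ∈ ({v : ℝ | a < v ∧ v < T ∧ α ≤ ω a v} ∪ {T}) :=
      Or.inl ⟨hu1, hu2.trans_le hbT, hαu⟩
    have := csInf_le (tau_bddBelow hω hT i) hmem
    rw [← greedyTau_succ, ← hbdef] at this
    exact absurd this (not_le.2 hu2)

lemma tau_gap_ge (hω : IsControl T ω) (hT : 0 < T) (hα : 0 < α) (i : ℕ)
    (hbT : greedyTau ω α 0 T (i+1) < T) :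
    α ≤ ω (greedyTau ω α 0 T i) (greedyTau ω α 0 T (i+1)) := by
  set a := greedyTau ω α 0 T i with ha
  set b := greedyTau ω α 0 T (i+1) with hbdef
  obtain ⟨ha0, haT, hab⟩ := tau_bounds hω hT (α := α) i
  by_contra hcon
  push_neg at hcon
  have hc : ContinuousWithinAt (fun u => ω a u) (Icc a T) b :=
    (omega_cont hω ha0).continuousWithinAt ⟨hab, hbT.le⟩
  rw [Metric.continuousWithinAt_iff] at hc
  obtain ⟨δ, hδ, hd⟩ := hc (α - ω a b) (by linarith)
  have hε : (0:ℝ) < min δ (T - b) := lt_min hδ (by linarith)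
  have hlt : sInf ({v : ℝ | a < v ∧ v < T ∧ α ≤ ω a v} ∪ {T}) < b + min δ (T - b) := by
    rw [← greedyTau_succ, ← hbdef]; linarith
  obtain ⟨x, hxmem, hx⟩ := (csInf_lt_iff (tau_bddBelow hω hT i)
    ⟨T, Or.inr rfl⟩).1 hlt
  have hxb : b ≤ x := by
    have := csInf_le (tau_bddBelow hω hT i) hxmem
    rw [← greedyTau_succ, ← hbdef] at this
    exact this
  rcases hxmem with ⟨hax, hxT, hαx⟩ | hxT
  · have hxmem2 : x ∈ Icc a T := ⟨hax.le, hxT.le⟩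
    have hdist : dist x b < δ := by
      rw [Real.dist_eq, abs_sub_lt_iff]
      have := min_le_left δ (T - b)
      constructor <;> linarith
    have hval := hd hxmem2 hdist
    rw [Real.dist_eq, abs_sub_lt_iff] at hval
    linarith [hval.1]
  · rw [Set.mem_singleton_iff] at hxT
    rw [hxT] at hx
    have := min_le_right δ (T - b)
    linarith

lemma tau_top (hω : IsControl T ω) (hT : 0 < T) (hα : 0 < α) :
    greedyTau ω α 0 T (greedyN ω α 0 T + 1) = T := by
  have hstep : ∀ n : ℕ, greedyTau ω α 0 T n < T →
      (n : ℝ) * α ≤ ω 0 (greedyTau ω α 0 T n) := by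
    intro n
    induction n with
    | zero =>
      intro _
      have : greedyTau ω α 0 T 0 = 0 := rfl
      rw [this, hω.2.2.1 0 ⟨le_refl _, hT.le⟩]
      norm_num
    | succ n ih =>
      intro hn1
      obtain ⟨h0, hT', hmono⟩ := tau_bounds hω hT (α := α) n
      have hn : greedyTau ω α 0 T n < T := lt_of_le_of_lt hmono hn1
      have h1 := ih hn
      have h2 := tau_gap_ge hω hT hα n hn1
      have h3 := hω.2.2.2 0 (greedyTau ω α 0 T n) (greedyTau ω α 0 T (n+1))
        (le_refl _) h0 hmono (tau_bounds hω hT (α := α) (n+1)).2.1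
      push_cast
      linarith
  have hbdd : BddAbove {n : ℕ | greedyTau ω α 0 T n < T} := by
    refine ⟨⌊ω 0 T / α⌋₊, ?_⟩
    intro m hm
    apply Nat.le_floor
    rw [le_div_iff₀ hα]
    have h1 := hstep m hm
    have h2 : ω 0 (greedyTau ω α 0 T m) ≤ ω 0 T := by
      obtain ⟨h0, hT', -⟩ := tau_bounds hω hT (α := α) m
      have := hω.2.2.2 0 (greedyTau ω α 0 T m) T (le_refl _) h0 hT' (le_refl _)
      have := hω.2.1 (greedyTau ω α 0 T m) T h0 hT' (le_refl _)
      linarith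
    linarith
  have hne : {n : ℕ | greedyTau ω α 0 T n < T}.Nonempty := ⟨0, hT⟩
  have hmem : greedyN ω α 0 T ∈ {n : ℕ | greedyTau ω α 0 T n < T} :=
    Nat.sSup_mem hne hbdd
  have hnot : greedyN ω α 0 T + 1 ∉ {n : ℕ | greedyTau ω α 0 T n < T} := by
    intro h
    have := le_csSup hbdd h
    have : greedyN ω α 0 T + 1 ≤ greedyN ω α 0 T := this
    omega
  have hle := (tau_bounds hω hT (α := α) (greedyN ω α 0 T + 1)).2.1
  rcases lt_or_eq_of_le hle with h | h
  · exact absurd h hnot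
  · exact h

end

/-- key step of Lemma `lemma:rem_RDE_sol` of the paper: a local
bound `|R_{s,t}| ≤ c·ω(s,t)^{2/p}`, valid whenever `ω(s,t) ≤ α`, for the remainder
`R_{s,t} = y_{s,t} − V(y_s)Z_{s,t}` of a controlled path propagates to the global
bound `|R_{s,t}| ≤ (c+1)(N_α(ω;[0,T]) + 2)·ω(s,t)^{2/p}`. -/
theorem remainder_global_bound
    (T p α : ℝ) (hT : 0 < T) (hp2 : 2 ≤ p) (hp3 : p < 3) (hα : 0 < α)
    (e n : ℕ)
    (ω : ℝ → ℝ → ℝ) (hω : IsControl T ω)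
    (Z : ℝ → EuclideanSpace ℝ (Fin e)) (y : ℝ → EuclideanSpace ℝ (Fin n))
    (V : EuclideanSpace ℝ (Fin n) →
      (EuclideanSpace ℝ (Fin e) →L[ℝ] EuclideanSpace ℝ (Fin n)))
    (hV : LipschitzWith 1 V)
    (hZ : ∀ s t, 0 ≤ s → s ≤ t → t ≤ T → ‖Z t - Z s‖ ≤ ω s t ^ (1 / p))
    (hy : ∀ s t, 0 ≤ s → s ≤ t → t ≤ T → ‖y t - y s‖ ≤ ω s t ^ (1 / p))
    (c : ℝ) (hc : 0 ≤ c)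
    (hloc : ∀ s t, 0 ≤ s → s ≤ t → t ≤ T → ω s t ≤ α →
      ‖y t - y s - V (y s) (Z t - Z s)‖ ≤ c * ω s t ^ (2 / p)) :
    ∀ s t, 0 ≤ s → s ≤ t → t ≤ T →
      ‖y t - y s - V (y s) (Z t - Z s)‖
        ≤ (c + 1) * ((greedyN ω α 0 T : ℝ) + 2) * ω s t ^ (2 / p) := by
  intro s t hs hst htT
  have hp0 : (0:ℝ) < p := lt_of_lt_of_le two_pos hp2
  have hsT : s ≤ T := hst.trans htT
  have ht0 : 0 ≤ t := hs.trans hst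
  set N := greedyN ω α 0 T with hN
  set σ : ℕ → ℝ := fun i => min (max s (greedyTau ω α 0 T i)) t with hσ
  -- basic facts about σ
  have hσmem : ∀ i, s ≤ σ i ∧ σ i ≤ t := by
    intro i
    exact ⟨le_min (le_max_left _ _) hst, min_le_right _ _⟩
  have hσ0T : ∀ i, 0 ≤ σ i ∧ σ i ≤ T := fun i =>
    ⟨hs.trans (hσmem i).1, (hσmem i).2.trans htT⟩
  have hσmono : ∀ i, σ i ≤ σ (i+1) := by
    intro i
    exact min_le_min (max_le_max (le_refl s) (tau_bounds hω hT (α := α) i).2.2)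
      (le_refl t)
  have hσ0 : σ 0 = s := by
    have h0 : greedyTau ω α 0 T 0 = 0 := rfl
    simp only [hσ, h0, max_eq_left hs, min_eq_left hst]
  have hσlast : σ (N + 1) = t := by
    simp only [hσ, hN, tau_top hω hT hα, max_eq_right hsT, min_eq_right htT]
  have hσgap : ∀ i, ω (σ i) (σ (i+1)) ≤ α := by
    intro i
    obtain ⟨ha0, haT, hab⟩ := tau_bounds hω hT (α := α) i
    set a := greedyTau ω α 0 T i
    set b := greedyTau ω α 0 T (i+1)
    have hbT : b ≤ T := (tau_bounds hω hT (α := α) (i+1)).2.1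
    by_cases hbs : b ≤ s
    · have h1 : σ i = s := by
        simp only [hσ, max_eq_left (hab.trans hbs), min_eq_left hst]
        rw [max_eq_left (hab.trans hbs), min_eq_left hst]
      have h2 : σ (i+1) = s := by
        simp only [hσ, max_eq_left hbs, min_eq_left hst]
        rw [max_eq_left hbs, min_eq_left hst]
      rw [h1, h2, hω.2.2.1 s ⟨hs, hsT⟩]
      exact hα.le
    · by_cases hta : t ≤ a
      · have h1 : σ i = t := by
          simp only [hσ]
          exact min_eq_right (hta.trans (le_max_right s a))
        have h2 : σ (i+1) = t := by
          simp only [hσ]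
          exact min_eq_right ((hta.trans hab).trans (le_max_right s b))
        rw [h1, h2, hω.2.2.1 t ⟨ht0, htT⟩]
        exact hα.le
      · push_neg at hbs hta
        have h1 : σ i = max s a := by
          simp only [hσ]
          exact min_eq_left (max_le hst hta.le)
        have h2 : σ (i+1) = min b t := by
          simp only [hσ, max_eq_right hbs.le]
          rw [max_eq_right hbs.le]
        rw [h1, h2]
        calc ω (max s a) (min b t) ≤ ω a b := by
              refine omega_mono hω ha0 (le_max_right s a) ?_ (min_le_left b t) hbT
              exact max_le (le_min hbs.le hst) (le_min hab hta.le)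
          _ ≤ α := tau_gap_le hω hT hα i
  -- rpow facts
  have hωst : 0 ≤ ω s t := hω.2.1 s t hs hst htT
  have hE : (0:ℝ) ≤ ω s t ^ (2/p) := Real.rpow_nonneg hωst _
  have hE1 : (0:ℝ) ≤ ω s t ^ (1/p) := Real.rpow_nonneg hωst _
  have hmulE : ω s t ^ (1/p) * ω s t ^ (1/p) = ω s t ^ (2/p) := by
    rw [← Real.rpow_add' hωst (by positivity)]
    norm_num
    ring_nf
  -- chaining
  have key : ∀ m : ℕ, ‖y (σ m) - y s - V (y s) (Z (σ m) - Z s)‖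
      ≤ (c+1) * m * ω s t ^ (2/p) := by
    intro m
    induction m with
    | zero => rw [hσ0]; simp
    | succ m ih =>
      obtain ⟨hsa, hat⟩ := hσmem m
      obtain ⟨hsb, hbt⟩ := hσmem (m+1)
      obtain ⟨ha0, haT⟩ := hσ0T m
      obtain ⟨hb0, hbT'⟩ := hσ0T (m+1)
      have hab : σ m ≤ σ (m+1) := hσmono m
      set a := σ m
      set b := σ (m+1)
      have hdecomp : y b - y s - V (y s) (Z b - Z s)
          = (y a - y s - V (y s) (Z a - Z s)) + (y b - y a - V (y a) (Z b - Z a))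
            + ((V (y a) - V (y s)) (Z b - Z a)) := by
        have h1 : Z b - Z s = (Z a - Z s) + (Z b - Z a) := by abel
        rw [h1, map_add]
        simp only [ContinuousLinearMap.sub_apply]
        abel
      have hωab : ω a b ≤ ω s t := omega_mono hω hs hsa hab hbt htT
      have hωsa : ω s a ≤ ω s t := omega_mono hω hs (le_refl s) hsa hat htT
      have habnn : 0 ≤ ω a b := hω.2.1 a b ha0 hab hbT'
      have hloc' : ‖y b - y a - V (y a) (Z b - Z a)‖ ≤ c * ω s t ^ (2/p) := by
        refine le_trans (hloc a b ha0 hab hbT' (le_trans ?_ (hσgap m))) ?_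
        · exact le_refl _
        · exact mul_le_mul_of_nonneg_left
            (Real.rpow_le_rpow habnn hωab (by positivity)) hc
      have hcross : ‖(V (y a) - V (y s)) (Z b - Z a)‖ ≤ ω s t ^ (2/p) := by
        have h1 : ‖(V (y a) - V (y s)) (Z b - Z a)‖
            ≤ ‖V (y a) - V (y s)‖ * ‖Z b - Z a‖ :=
          (V (y a) - V (y s)).le_opNorm _
        have h2 : ‖V (y a) - V (y s)‖ ≤ ‖y a - y s‖ := by
          rw [← dist_eq_norm, ← dist_eq_norm]
          simpa using hV.dist_le_mul (y a) (y s)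
        have h3 : ‖y a - y s‖ ≤ ω s t ^ (1/p) :=
          le_trans (hy s a hs hsa haT)
            (Real.rpow_le_rpow (hω.2.1 s a hs hsa haT) hωsa (by positivity))
        have h4 : ‖Z b - Z a‖ ≤ ω s t ^ (1/p) :=
          le_trans (hZ a b ha0 hab hbT')
            (Real.rpow_le_rpow habnn hωab (by positivity))
        calc ‖(V (y a) - V (y s)) (Z b - Z a)‖
            ≤ ‖y a - y s‖ * ‖Z b - Z a‖ :=
              h1.trans (mul_le_mul_of_nonneg_right h2 (norm_nonneg _))
          _ ≤ ω s t ^ (1/p) * ω s t ^ (1/p) :=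
              mul_le_mul h3 h4 (norm_nonneg _) hE1
          _ = ω s t ^ (2/p) := hmulE
      calc ‖y b - y s - V (y s) (Z b - Z s)‖
          ≤ ‖y a - y s - V (y s) (Z a - Z s)‖
            + ‖y b - y a - V (y a) (Z b - Z a)‖
            + ‖(V (y a) - V (y s)) (Z b - Z a)‖ := by
            rw [hdecomp]; exact norm_add₃_le
        _ ≤ (c+1) * m * ω s t ^ (2/p) + c * ω s t ^ (2/p) + ω s t ^ (2/p) := by
            exact add_le_add (add_le_add ih hloc') hcross
        _ = (c+1) * (↑(m+1)) * ω s t ^ (2/p) := by push_cast; ring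
  have hfin := key (N + 1)
  rw [hσlast] at hfin
  refine hfin.trans ?_
  have : (c+1) * (↑(N+1)) ≤ (c+1) * ((N:ℝ) + 2) := by
    push_cast
    nlinarith
  nlinarith [hE, hfin]
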